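/- If A is an n×n totally positive matrix, then for every nonzero x ∈ ℝⁿ, s⁺(Ax) ≤ s⁻(x). -/

import Mathlib

open scoped Classical

def TotallyNonneg {n : ℕ} (A : Matrix (Fin n) (Fin n) ℝ) : Prop :=
  ∀ (k : ℕ) (r c : Fin k → Fin n), StrictMono r → StrictMono c →
    0 ≤ (A.submatrix r c).det

def TotallyPos {n : ℕ} (A : Matrix (Fin n) (Fin n) ℝ) : Prop :=
  ∀ (k : ℕ) (r c : Fin k → Fin n), StrictMono r → StrictMono c →
    0 < (A.submatrix r c).det

noncomputable def countSignChanges : List ℝ → ℕ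
  | a :: b :: t => (if a * b < 0 then 1 else 0) + countSignChanges (b :: t)
  | _ => 0

noncomputable def sMinus {n : ℕ} (y : Fin n → ℝ) : ℕ :=
  countSignChanges ((List.ofFn y).filter (fun x => decide (x ≠ 0)))

noncomputable def sPlus {n : ℕ} (y : Fin n → ℝ) : ℕ :=
  sSup {k | ∃ z : Fin n → ℝ,
    (∀ i, (y i ≠ 0 → z i = y i) ∧ (y i = 0 → z i = 1 ∨ z i = -1)) ∧
    countSignChanges (List.ofFn z) = k}

def MatIrreducible {n : ℕ} (A : Matrix (Fin n) (Fin n) ℝ) : Prop :=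
  ∀ S : Set (Fin n), S.Nonempty → S ≠ Set.univ →
    ∃ i ∈ S, ∃ j ∉ S, A i j ≠ 0

/-- adjacent entries have strictly opposite signs -/
def AltL : List ℝ → Prop
  | a :: b :: t => a * b < 0 ∧ AltL (b :: t)
  | _ => True

lemma countSignChanges_cons_cons (a b : ℝ) (t : List ℝ) :
    countSignChanges (a :: b :: t) = (if a * b < 0 then 1 else 0) + countSignChanges (b :: t) := rfl

lemma countSignChanges_le_cons (a : ℝ) (l : List ℝ) :
    countSignChanges l ≤ countSignChanges (a :: l) := by
  cases l with
  | nil => simp [countSignChanges]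
  | cons b t => rw [countSignChanges_cons_cons]; omega

lemma countSignChanges_zero_cons (l : List ℝ) :
    countSignChanges ((0:ℝ) :: l) = countSignChanges l := by
  cases l with
  | nil => rfl
  | cons b t => rw [countSignChanges_cons_cons]; simp

/-- pinned extraction: an alternating sublist starting with a given nonzero head -/
lemma altl_pinned : ∀ (l : List ℝ) (a : ℝ), a ≠ 0 →
    ∃ sub : List ℝ, List.Sublist (a :: sub) (a :: l) ∧ AltL (a :: sub) ∧
      countSignChanges (a :: l) ≤ sub.length
  | [], a, _ => ⟨[], List.Sublist.refl _, trivial, by simp [countSignChanges]⟩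
  | b :: t, a, ha => by
    by_cases hb : b = 0
    · subst hb
      obtain ⟨sub, hsl, halt, hlen⟩ := altl_pinned t a ha
      refine ⟨sub, ?_, halt, ?_⟩
      · have h1 : List.Sublist sub t := (List.cons_sublist_cons).1 hsl
        exact List.cons_sublist_cons.2 (h1.trans (List.sublist_cons_self _ _))
      · have h0 : countSignChanges (a :: (0:ℝ) :: t) = countSignChanges t := by
          rw [countSignChanges_cons_cons, countSignChanges_zero_cons]; simp
        rw [h0]
        exact le_trans (countSignChanges_le_cons a t) hlen
    · by_cases hab : a * b < 0
      · obtain ⟨sub, hsl, halt, hlen⟩ := altl_pinned t b hb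
        refine ⟨b :: sub, List.cons_sublist_cons.2 hsl, ⟨hab, halt⟩, ?_⟩
        rw [countSignChanges_cons_cons, if_pos hab]
        simp only [List.length_cons]
        omega
      · obtain ⟨sub, hsl, halt, hlen⟩ := altl_pinned t b hb
        have hsub : List.Sublist sub t := (List.cons_sublist_cons).1 hsl
        refine ⟨sub, List.cons_sublist_cons.2 (hsub.trans (List.sublist_cons_self _ _)), ?_, ?_⟩
        · cases sub with
          | nil => trivial
          | cons c s =>
            refine ⟨?_, halt.2⟩
            have hbc : b * c < 0 := halt.1
            have hab' : 0 < a * b := by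
              rcases lt_trichotomy (a*b) 0 with h|h|h
              · exact absurd h hab
              · exact absurd (mul_eq_zero.1 h) (by push_neg; exact ⟨ha, hb⟩)
              · exact h
            nlinarith [mul_pos hab' (neg_pos.mpr hbc), mul_self_pos.mpr hb]
        · rw [countSignChanges_cons_cons, if_neg hab]
          simpa using hlen
termination_by l => l.length

lemma altl_extract : ∀ (l : List ℝ), l ≠ [] →
    ∃ sub : List ℝ, List.Sublist sub l ∧ AltL sub ∧ countSignChanges l + 1 ≤ sub.length
  | [], h => absurd rfl h
  | a :: t, _ => by
    by_cases ha : a = 0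
    · subst ha
      cases t with
      | nil => exact ⟨[0], List.Sublist.refl _, trivial, by simp [countSignChanges]⟩
      | cons b t' =>
        obtain ⟨sub, hsl, halt, hlen⟩ := altl_extract (b :: t') (by simp)
        exact ⟨sub, hsl.trans (List.sublist_cons_self _ _), halt, by
          rw [countSignChanges_zero_cons]; exact hlen⟩
    · obtain ⟨sub, hsl, halt, hlen⟩ := altl_pinned t a ha
      exact ⟨a :: sub, hsl, halt, by simpa using hlen⟩
termination_by l => l.length

lemma altl_take : ∀ (m : ℕ) (l : List ℝ), AltL l → AltL (l.take m)
  | 0, _, _ => trivial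
  | _+1, [], _ => trivial
  | _+1, [a], _ => by cases ‹ℕ›  <;> trivial
  | m+1, a :: b :: t, h => by
    cases m with
    | zero => trivial
    | succ m' => exact ⟨h.1, altl_take (m'+1) (b :: t) h.2⟩

noncomputable def nzList {n : ℕ} (y : Fin n → ℝ) : List ℝ :=
  (List.ofFn y).filter (fun x => decide (x ≠ 0))

lemma sMinus_eq_nz {n : ℕ} (y : Fin n → ℝ) : sMinus y = countSignChanges (nzList y) := rfl

lemma countSignChanges_cons_cons' (a b : ℝ) (t : List ℝ) :
    countSignChanges (a :: b :: t) = (if a * b < 0 then 1 else 0) + countSignChanges (b :: t) := rfl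

lemma csc_concat : ∀ (l : List ℝ) (hl : l ≠ []) (a : ℝ),
    countSignChanges (l ++ [a]) =
      countSignChanges l + (if l.getLast hl * a < 0 then 1 else 0)
  | [], hl, a => absurd rfl hl
  | [b], _, a => by simp [countSignChanges]; congr
  | b :: c :: t, _, a => by
    have ih := csc_concat (c :: t) (by simp) a
    simp only [List.cons_append] at ih ⊢
    rw [countSignChanges_cons_cons', countSignChanges_cons_cons', ih,
      List.getLast_cons (by simp : c :: t ≠ [])]
    ring

lemma csc_le_length : ∀ (l : List ℝ), countSignChanges l ≤ l.length
  | [] => le_refl _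
  | [_] => by simp [countSignChanges]
  | a :: b :: t => by
    rw [countSignChanges_cons_cons']
    have := csc_le_length (b :: t)
    have hif : (if a * b < 0 then 1 else 0) ≤ 1 := by split <;> omega
    simp only [List.length_cons] at *
    omega

/-- sign transfer lemmas -/
lemma sign_same {s a b : ℝ} (hb : b = s * |b|) (hab : 0 < b * a) : a = s * |a| := by
  have hbne : b ≠ 0 := by rintro rfl; simp at hab
  have hane : a ≠ 0 := by rintro rfl; simp at hab
  rcases lt_or_gt_of_ne hbne with hbneg | hbpos
  · have hs : s * |b| < 0 := hb ▸ hbneg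
    have haneg : a < 0 := by nlinarith
    rw [abs_of_neg hbneg] at hb
    rw [abs_of_neg haneg]
    have hs1 : s = -1 := by
      field_simp at hb ⊢
      nlinarith
    rw [hs1]; ring
  · have hapos : 0 < a := by nlinarith
    rw [abs_of_pos hbpos] at hb
    rw [abs_of_pos hapos]
    have hs1 : s = 1 := by
      field_simp at hb
      nlinarith
    rw [hs1]; ring

lemma sign_opp {s a b : ℝ} (hb : b = s * |b|) (hab : b * a < 0) : a = -s * |a| := by
  have : 0 < b * (-a) := by nlinarith
  have := sign_same (s := s) hb this
  rw [abs_neg] at this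
  nlinarith [this]

lemma nzList_mem_ne_zero {n : ℕ} {x : Fin n → ℝ} {a : ℝ} (h : a ∈ nzList x) : a ≠ 0 := by
  have := List.of_mem_filter h
  simpa using this

lemma getLast_eq_of_eq {l l' : List ℝ} (h : l = l') (hl : l ≠ []) (hl' : l' ≠ []) :
    l.getLast hl = l'.getLast hl' := by subst h; rfl

lemma blocks : ∀ {n : ℕ} (x : Fin n → ℝ) (hx : nzList x ≠ []),
    ∃ (g : Fin n → ℕ) (ε : ℝ), (ε = 1 ∨ ε = -1) ∧
      (∀ i j : Fin n, i ≤ j → g i ≤ g j) ∧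
      (∀ i, g i ≤ sMinus x) ∧
      (∀ i, x i = ε * (-1)^(g i) * |x i|) ∧
      (∀ j, j ≤ sMinus x → ∃ i, g i = j ∧ x i ≠ 0) ∧
      (∃ i, g i = sMinus x ∧ x i ≠ 0 ∧ x i = (nzList x).getLast hx) := by
  intro n
  induction n with
  | zero => intro x hx; exact absurd (by simp [nzList]) hx
  | succ n ih =>
    intro x hx
    set x' : Fin n → ℝ := fun i => x (Fin.castSucc i) with hx'def
    set a : ℝ := x (Fin.last n) with hadef
    have hsplit : nzList x = nzList x' ++ (List.filter (fun v => decide (v ≠ 0)) [a]) := by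
      unfold nzList
      rw [List.ofFn_succ', List.concat_eq_append, List.filter_append]
    by_cases ha : a = 0
    · -- last entry is zero
      have hsame : nzList x = nzList x' := by
        rw [hsplit, ha]; simp
      have hx' : nzList x' ≠ [] := by rw [← hsame]; exact hx
      obtain ⟨g', ε, hε, hmono, hbd, hsgn, hsurj, i₀, hi₀g, hi₀ne, hi₀last⟩ := ih x' hx'
      have hsm : sMinus x = sMinus x' := by
        rw [sMinus_eq_nz x, sMinus_eq_nz x', hsame]
      refine ⟨fun i => if h : (i : ℕ) < n then g' ⟨i, h⟩ else sMinus x', ε, hε, ?_, ?_, ?_, ?_, ?_⟩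
      · intro i j hij
        by_cases hi : (i : ℕ) < n <;> by_cases hj : (j : ℕ) < n
        · simp only [dif_pos hi, dif_pos hj]
          exact hmono _ _ hij
        · simp only [dif_pos hi, dif_neg hj]
          exact hbd _
        · exfalso; have := Fin.le_iff_val_le_val.1 hij; omega
        · simp [dif_neg hi, dif_neg hj]
      · intro i
        by_cases hi : (i : ℕ) < n
        · simp only [dif_pos hi]; rw [hsm]; exact hbd _
        · simp [dif_neg hi, hsm]
      · intro i
        by_cases hi : (i : ℕ) < n
        · simp only [dif_pos hi]
          exact hsgn ⟨i, hi⟩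
        · have hi' : i = Fin.last n := by ext; simp at hi ⊢; omega
          simp only [dif_neg hi]
          rw [hi', ← hadef, ha]; simp
      · intro j hj
        rw [hsm] at hj
        obtain ⟨i, hgi, hne⟩ := hsurj j hj
        refine ⟨Fin.castSucc i, ?_, hne⟩
        have hcs : ((Fin.castSucc i : Fin (n+1)) : ℕ) < n := i.isLt
        simp only [dif_pos hcs]
        exact hgi
      · refine ⟨Fin.castSucc i₀, ?_, hi₀ne, ?_⟩
        · have hcs : ((Fin.castSucc i₀ : Fin (n+1)) : ℕ) < n := i₀.isLt
          simp only [dif_pos hcs, hsm]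
          exact hi₀g
        · rw [show x (Fin.castSucc i₀) = x' i₀ from rfl, hi₀last]
          exact getLast_eq_of_eq hsame.symm _ _
    · -- last entry nonzero
      have hfa : List.filter (fun v => decide (v ≠ 0)) [a] = [a] := by simp [ha]
      have hsplit' : nzList x = nzList x' ++ [a] := by rw [hsplit, hfa]
      have hglast : (nzList x).getLast hx = a := by
        have h2 := List.getLast_append_right (l := nzList x') (l' := [a]) (by simp)
        rw [getLast_eq_of_eq hsplit' hx (by rw [← hsplit']; exact hx), h2]
        simp
      by_cases hnil : nzList x' = []
      · -- all earlier entries zero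
        have hall : ∀ i : Fin n, x' i = 0 := by
          intro i
          by_contra hne
          have : x' i ∈ nzList x' := by
            apply List.mem_filter.2
            exact ⟨List.mem_ofFn.2 ⟨i, rfl⟩, by simpa using hne⟩
          rw [hnil] at this; simp at this
        have hsm : sMinus x = 0 := by
          rw [sMinus_eq_nz x, hsplit', hnil]
          simp [countSignChanges]
        refine ⟨fun _ => 0, if 0 < a then 1 else -1, by split <;> simp, ?_, ?_, ?_, ?_, ?_⟩
        · exact fun _ _ _ => le_refl _
        · simp
        · intro i
          by_cases hi : (i : ℕ) < n
          · rw [show x i = x' ⟨i, hi⟩ from rfl, hall]; simp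
          · have hi' : i = Fin.last n := by ext; simp at hi ⊢; omega
            rw [hi', ← hadef]
            rcases lt_trichotomy a 0 with h|h|h
            · rw [if_neg (by linarith), abs_of_neg h]; ring
            · exact absurd h ha
            · rw [if_pos h, abs_of_pos h]; ring
        · intro j hj
          rw [hsm] at hj
          interval_cases j
          exact ⟨Fin.last n, rfl, ha⟩
        · exact ⟨Fin.last n, by simp [hsm], ha, hglast.symm⟩
      · -- earlier entries contain a nonzero
        obtain ⟨g', ε, hε, hmono, hbd, hsgn, hsurj, i₀, hi₀g, hi₀ne, hi₀last⟩ := ih x' hnil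
        have hbne : (nzList x').getLast hnil ≠ 0 := nzList_mem_ne_zero (List.getLast_mem hnil)
        have hsm : sMinus x = sMinus x' +
            (if (nzList x').getLast hnil * a < 0 then 1 else 0) := by
          rw [sMinus_eq_nz x, sMinus_eq_nz x', hsplit', csc_concat _ hnil]
        have hbsgn : (nzList x').getLast hnil = (ε * (-1)^(sMinus x')) * |(nzList x').getLast hnil| := by
          rw [← hi₀last, ← hi₀g]
          exact hsgn i₀
        have hba : (nzList x').getLast hnil * a ≠ 0 := mul_ne_zero hbne ha
        by_cases hlt : (nzList x').getLast hnil * a < 0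
        · -- new sign change
          have hsm1 : sMinus x = sMinus x' + 1 := by rw [hsm, if_pos hlt]
          refine ⟨fun i => if h : (i : ℕ) < n then g' ⟨i, h⟩ else sMinus x' + 1, ε, hε,
            ?_, ?_, ?_, ?_, ?_⟩
          · intro i j hij
            by_cases hi : (i : ℕ) < n <;> by_cases hj : (j : ℕ) < n
            · simp only [dif_pos hi, dif_pos hj]; exact hmono _ _ hij
            · simp only [dif_pos hi, dif_neg hj]
              have := hbd (⟨i, hi⟩ : Fin n); omega
            · exfalso; have := Fin.le_iff_val_le_val.1 hij; omega
            · simp [dif_neg hi, dif_neg hj]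
          · intro i
            by_cases hi : (i : ℕ) < n
            · simp only [dif_pos hi]; rw [hsm1]
              have := hbd (⟨i, hi⟩ : Fin n); omega
            · simp [dif_neg hi, hsm1]
          · intro i
            by_cases hi : (i : ℕ) < n
            · simp only [dif_pos hi]
              exact hsgn ⟨i, hi⟩
            · have hi' : i = Fin.last n := by ext; simp at hi ⊢; omega
              simp only [dif_neg hi]
              rw [hi', ← hadef]
              have h1 := sign_opp hbsgn hlt
              have h2 : ε * (-1:ℝ)^(sMinus x'+1) * |a| = -(ε * (-1)^(sMinus x')) * |a| := by
                rw [pow_succ]; ring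
              rw [h2]; exact h1
          · intro j hj
            rw [hsm1] at hj
            rcases Nat.lt_or_ge j (sMinus x' + 1) with h|h
            · obtain ⟨i, hgi, hne⟩ := hsurj j (by omega)
              refine ⟨Fin.castSucc i, ?_, hne⟩
              have hcs : ((Fin.castSucc i : Fin (n+1)) : ℕ) < n := i.isLt
              simp only [dif_pos hcs]
              exact hgi
            · have hj' : j = sMinus x' + 1 := by omega
              refine ⟨Fin.last n, ?_, ha⟩
              simp [hj']
          · exact ⟨Fin.last n, by simp [hsm1], ha, hglast.symm⟩
        · -- no new sign change
          have hgt : 0 < (nzList x').getLast hnil * a := by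
            rcases lt_trichotomy ((nzList x').getLast hnil * a) 0 with h|h|h
            · exact absurd h hlt
            · exact absurd h hba
            · exact h
          have hsm1 : sMinus x = sMinus x' := by rw [hsm, if_neg hlt]; omega
          refine ⟨fun i => if h : (i : ℕ) < n then g' ⟨i, h⟩ else sMinus x', ε, hε,
            ?_, ?_, ?_, ?_, ?_⟩
          · intro i j hij
            by_cases hi : (i : ℕ) < n <;> by_cases hj : (j : ℕ) < n
            · simp only [dif_pos hi, dif_pos hj]; exact hmono _ _ hij
            · simp only [dif_pos hi, dif_neg hj]; exact hbd _
            · exfalso; have := Fin.le_iff_val_le_val.1 hij; omega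
            · simp [dif_neg hi, dif_neg hj]
          · intro i
            by_cases hi : (i : ℕ) < n
            · simp only [dif_pos hi]; rw [hsm1]; exact hbd _
            · simp [dif_neg hi, hsm1]
          · intro i
            by_cases hi : (i : ℕ) < n
            · simp only [dif_pos hi]
              exact hsgn ⟨i, hi⟩
            · have hi' : i = Fin.last n := by ext; simp at hi ⊢; omega
              simp only [dif_neg hi]
              rw [hi', ← hadef]
              exact sign_same hbsgn hgt
          · intro j hj
            rw [hsm1] at hj
            obtain ⟨i, hgi, hne⟩ := hsurj j hj
            refine ⟨Fin.castSucc i, ?_, hne⟩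
            have hcs : ((Fin.castSucc i : Fin (n+1)) : ℕ) < n := i.isLt
            simp only [dif_pos hcs]
            exact hgi
          · exact ⟨Fin.last n, by simp [hsm1], ha, hglast.symm⟩


lemma altl_sign : ∀ (l : List ℝ) (a b : ℝ), AltL (a :: b :: l) →
    ∀ (t : ℕ) (ht : t < l.length + 2), 0 < (-1:ℝ)^t * (a * (a :: b :: l).get ⟨t, ht⟩)
  | l, a, b, h, 0, ht => by
    have ha : a ≠ 0 := by
      rintro rfl
      have := h.1; simp at this
    simpa using mul_self_pos.mpr ha
  | l, a, b, h, 1, ht => by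
    have := h.1
    simp only [List.get, pow_one]
    nlinarith
  | [], a, b, h, (s+2), ht => absurd ht (by simp at ht ⊢)
  | (c::l'), a, b, h, (s+2), ht => by
    have h1 := altl_sign l' b c h.2 (s+1) (by
      simp only [List.length_cons] at ht ⊢; omega)
    have hab := h.1
    have hb : b ≠ 0 := by rintro rfl; simp at hab
    have hg : (a :: b :: c :: l').get ⟨s+2, ht⟩ =
        (b :: c :: l').get ⟨s+1, by simp only [List.length_cons] at ht ⊢; omega⟩ := rfl
    rw [hg]
    rw [show ((-1:ℝ))^(s+2) = ((-1:ℝ))^(s+1) * (-1) from pow_succ _ _]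
    nlinarith [mul_pos h1 (neg_pos.mpr hab), mul_self_pos.mpr hb]

lemma altl_sign' (l : List ℝ) (hl : AltL l) (h2 : 2 ≤ l.length) (t : ℕ) (ht : t < l.length)
    (h0 : 0 < l.length) : 0 < (-1:ℝ)^t * (l.get ⟨0, h0⟩ * l.get ⟨t, ht⟩) := by
  match l with
  | a :: b :: l' => exact altl_sign l' a b hl t (by simp only [List.length_cons] at ht ⊢; omega)


open Matrix in
lemma minor_pos {n k : ℕ} (A : Matrix (Fin n) (Fin n) ℝ) (hA : TotallyPos A)
    (x : Fin n → ℝ) (G : Fin n → Fin (k+1))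
    (hmono : ∀ i j : Fin n, i ≤ j → (G i : ℕ) ≤ (G j : ℕ))
    (hsurj : ∀ j : Fin (k+1), ∃ i, G i = j ∧ x i ≠ 0)
    (ρ : Fin (k+1) → Fin n) (hρ : StrictMono ρ) :
    0 < (((Matrix.of fun i j => ∑ i' ∈ Finset.univ.filter (fun i' => G i' = j),
        |x i'| * A i i') : Matrix (Fin n) (Fin (k+1)) ℝ).submatrix ρ id).det := by
  set C : Matrix (Fin n) (Fin (k+1)) ℝ :=
    Matrix.of fun i j => ∑ i' ∈ Finset.univ.filter (fun i' => G i' = j), |x i'| * A i i' with hC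
  rw [← Matrix.det_transpose]
  have hrows : ((C.submatrix ρ id)ᵀ : Matrix (Fin (k+1)) (Fin (k+1)) ℝ) =
      fun j => ∑ i' ∈ Finset.univ.filter (fun i' => G i' = j),
        |x i'| • (fun t => A (ρ t) i') := by
    funext j t
    simp only [Matrix.transpose_apply, Matrix.submatrix_apply, hC, Matrix.of_apply, id_eq,
      Finset.sum_apply, Pi.smul_apply, smul_eq_mul]
  have hdet : ((C.submatrix ρ id)ᵀ).det =
      (Matrix.detRowAlternating :
        (Fin (k+1) → ℝ) [⋀^Fin (k+1)]→ₗ[ℝ] ℝ).toMultilinearMap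
        (fun j => ∑ i' ∈ Finset.univ.filter (fun i' => G i' = j),
          |x i'| • (fun t => A (ρ t) i')) := by
    rw [show ((C.submatrix ρ id)ᵀ).det
      = (Matrix.detRowAlternating ((C.submatrix ρ id)ᵀ)) from rfl, hrows]
    rfl
  rw [hdet, MultilinearMap.map_sum_finset]
  have hterm : ∀ p ∈ Fintype.piFinset (fun j : Fin (k+1) =>
      Finset.univ.filter (fun i' => G i' = j)),
      ((Matrix.detRowAlternating :
        (Fin (k+1) → ℝ) [⋀^Fin (k+1)]→ₗ[ℝ] ℝ).toMultilinearMap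
        fun j => |x (p j)| • (fun t => A (ρ t) (p j)))
      = (∏ j, |x (p j)|) * (A.submatrix ρ p).det := by
    intro p hp
    rw [MultilinearMap.map_smul_univ]
    rw [show ((Matrix.detRowAlternating :
        (Fin (k+1) → ℝ) [⋀^Fin (k+1)]→ₗ[ℝ] ℝ).toMultilinearMap
        fun j => (fun t => A (ρ t) (p j))) = ((A.submatrix ρ p)ᵀ).det from rfl]
    rw [Matrix.det_transpose]
    simp [smul_eq_mul]
  have hsm : ∀ p ∈ Fintype.piFinset (fun j : Fin (k+1) =>
      Finset.univ.filter (fun i' => G i' = j)), StrictMono p := by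
    intro p hp j j' hjj
    have hmem := Fintype.mem_piFinset.1 hp
    have hj : G (p j) = j := by have := hmem j; simpa using this
    have hj' : G (p j') = j' := by have := hmem j'; simpa using this
    by_contra hle
    push_neg at hle
    have := hmono _ _ hle
    rw [hj, hj'] at this
    exact absurd (Fin.lt_iff_val_lt_val.1 hjj) (by omega)
  apply Finset.sum_pos'
  · intro p hp
    rw [hterm p hp]
    have hdetp : 0 < (A.submatrix ρ p).det := hA (k+1) ρ p hρ (hsm p hp)
    positivity
  · refine ⟨fun j => Classical.choose (hsurj j), ?_, ?_⟩
    · apply Fintype.mem_piFinset.2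
      intro j
      simp [(Classical.choose_spec (hsurj j)).1]
    · rw [hterm _ (by
        apply Fintype.mem_piFinset.2
        intro j
        simp [(Classical.choose_spec (hsurj j)).1])]
      have hdetp : 0 < (A.submatrix ρ (fun j => Classical.choose (hsurj j))).det :=
        hA (k+1) ρ _ hρ (hsm _ (by
          apply Fintype.mem_piFinset.2
          intro j
          simp [(Classical.choose_spec (hsurj j)).1]))
      have habs : ∀ j : Fin (k+1), 0 < |x (Classical.choose (hsurj j))| :=
        fun j => abs_pos.2 (Classical.choose_spec (hsurj j)).2
      have : 0 < ∏ j, |x (Classical.choose (hsurj j))| :=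
        Finset.prod_pos (fun j _ => habs j)
      positivity


set_option maxRecDepth 10000 in
set_option maxHeartbeats 1000000 in
theorem tp_strong_svdp {n : ℕ} (A : Matrix (Fin n) (Fin n) ℝ)
    (hA : TotallyPos A) :
    ∀ x : Fin n → ℝ, x ≠ 0 → sPlus (A.mulVec x) ≤ sMinus x := by
  intro x hx
  set y : Fin n → ℝ := A.mulVec x with hy
  by_contra hcon
  push_neg at hcon
  obtain ⟨i₁, hi₁⟩ : ∃ i, x i ≠ 0 := by
    by_contra h; push_neg at h; exact hx (funext h)
  have hnz : nzList x ≠ [] := by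
    intro h
    have : x i₁ ∈ nzList x :=
      List.mem_filter.2 ⟨List.mem_ofFn.2 ⟨i₁, rfl⟩, by simpa using hi₁⟩
    rw [h] at this; simp at this
  set k := sMinus x with hk
  obtain ⟨g, ε, hε, hmono, hbd, hsgn, hsurj, -⟩ := blocks x hnz
  set G : Fin n → Fin (k+1) := fun i => ⟨g i, by have := hbd i; omega⟩ with hG
  have hGmono : ∀ i j : Fin n, i ≤ j → (G i : ℕ) ≤ (G j : ℕ) := fun i j hij => hmono i j hij
  have hGsurj : ∀ j : Fin (k+1), ∃ i, G i = j ∧ x i ≠ 0 := by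
    intro j
    obtain ⟨i, hgi, hne⟩ := hsurj (j : ℕ) (by have := j.isLt; omega)
    exact ⟨i, by ext; simp [hG, hgi], hne⟩
  set C : Matrix (Fin n) (Fin (k+1)) ℝ :=
    Matrix.of fun i j => ∑ i' ∈ Finset.univ.filter (fun i' => G i' = j), |x i'| * A i i' with hC
  set σ : Fin (k+1) → ℝ := fun j => ε * (-1)^(j:ℕ) with hσ
  have hminor : ∀ (ρ : Fin (k+1) → Fin n), StrictMono ρ → 0 < ((C.submatrix ρ id)).det :=
    fun ρ hρ => minor_pos A hA x G hGmono hGsurj ρ hρ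
  have hyC : ∀ i, y i = (C.mulVec σ) i := by
    intro i
    have h1 : (C.mulVec σ) i
        = ∑ j : Fin (k+1), ∑ i' ∈ Finset.univ.filter (fun i' => G i' = j),
            (|x i'| * A i i' * σ (G i')) := by
      simp only [Matrix.mulVec, dotProduct, hC, Matrix.of_apply]
      refine Finset.sum_congr rfl (fun j _ => ?_)
      rw [Finset.sum_mul]
      refine Finset.sum_congr rfl (fun i' hi' => ?_)
      have : G i' = j := (Finset.mem_filter.1 hi').2
      rw [this]
    rw [h1, Finset.sum_fiberwise]
    rw [hy]
    simp only [Matrix.mulVec, dotProduct]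
    refine Finset.sum_congr rfl (fun i' _ => ?_)
    have hx' : x i' = ε * (-1)^(g i') * |x i'| := hsgn i'
    have hσ' : σ (G i') = ε * (-1)^(g i') := rfl
    rw [hσ']
    first
    | linear_combination (A i i') * hx'
    | linear_combination (- A i i') * hx'
  -- obtain the completion z realizing sPlus y
  have hSne : {m | ∃ z : Fin n → ℝ,
      (∀ i, (y i ≠ 0 → z i = y i) ∧ (y i = 0 → z i = 1 ∨ z i = -1)) ∧
      countSignChanges (List.ofFn z) = m}.Nonempty :=
    ⟨_, ⟨fun i => if y i = 0 then 1 else y i,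
      fun i => ⟨fun h => if_neg h, fun h => Or.inl (if_pos h)⟩, rfl⟩⟩
  have hSbdd : BddAbove {m | ∃ z : Fin n → ℝ,
      (∀ i, (y i ≠ 0 → z i = y i) ∧ (y i = 0 → z i = 1 ∨ z i = -1)) ∧
      countSignChanges (List.ofFn z) = m} := by
    refine ⟨n, fun m hm => ?_⟩
    obtain ⟨z, _, hzc⟩ := hm
    calc m = countSignChanges (List.ofFn z) := hzc.symm
      _ ≤ (List.ofFn z).length := csc_le_length _
      _ = n := by simp
  have hmem : sPlus y ∈ {m | ∃ z : Fin n → ℝ,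
      (∀ i, (y i ≠ 0 → z i = y i) ∧ (y i = 0 → z i = 1 ∨ z i = -1)) ∧
      countSignChanges (List.ofFn z) = m} := Nat.sSup_mem hSne hSbdd
  obtain ⟨z, hzprop, hzc⟩ := hmem
  have hk1 : k + 2 ≤ countSignChanges (List.ofFn z) + 1 := by omega
  have hofn_ne : List.ofFn z ≠ [] := by
    intro h
    rw [List.ofFn_eq_nil_iff] at h
    exact absurd i₁.isLt (by omega)
  obtain ⟨sub, hsl, halt, hlen⟩ := altl_extract (List.ofFn z) hofn_ne
  have hlen2 : k + 2 ≤ sub.length := by omega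
  set sub' := sub.take (k+2) with hsub'
  have halt' : AltL sub' := altl_take _ _ halt
  have hsl' : List.Sublist sub' (List.ofFn z) := (List.take_sublist _ _).trans hsl
  have hlen' : sub'.length = k + 2 := by rw [hsub', List.length_take]; omega
  obtain ⟨f, hf⟩ := List.sublist_iff_exists_fin_orderEmbedding_get_eq.1 hsl'
  have hlofn : (List.ofFn z).length = n := List.length_ofFn
  set r : Fin (k+2) → Fin n := fun t => Fin.cast hlofn (f (Fin.cast hlen'.symm t)) with hr
  have hrmono : StrictMono r := by
    intro s t hst
    have h1 : (Fin.cast hlen'.symm s) < (Fin.cast hlen'.symm t) := hst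
    exact f.strictMono h1
  have hzr : ∀ t : Fin (k+2), z (r t) = sub'.get (Fin.cast hlen'.symm t) := by
    intro t
    rw [hf (Fin.cast hlen'.symm t), List.get_ofFn]
  have hzsign : ∀ t : Fin (k+2), 0 < (-1:ℝ)^(t:ℕ) * (z (r 0) * z (r t)) := by
    intro t
    have h0 : (0:ℕ) < sub'.length := by omega
    have h1 := altl_sign' sub' halt' (by omega) (t : ℕ) (by rw [hlen']; exact t.isLt) h0
    rw [hzr t, hzr 0]
    exact h1
  have hz0 : z (r 0) ≠ 0 := by
    intro h
    have := hzsign 0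
    rw [h] at this; simp at this
  have hysign : ∀ t : Fin (k+2), 0 ≤ (-1:ℝ)^(t:ℕ) * (z (r 0) * y (r t)) := by
    intro t
    by_cases hyt : y (r t) = 0
    · rw [hyt]; simp
    · rw [← (hzprop (r t)).1 hyt]; exact (hzsign t).le
  set B : Matrix (Fin (k+2)) (Fin (k+2)) ℝ :=
    Matrix.of (fun t => Fin.cons (y (r t)) (fun j => C (r t) j)) with hB
  have hBdet : B.det = 0 := by
    refine Matrix.exists_mulVec_eq_zero_iff.mp ⟨Fin.cons (-1) σ, ?_, ?_⟩
    · intro h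
      have := congrFun h 0
      simp at this
    · funext t
      have h1 : (B.mulVec (Fin.cons (-1) σ)) t
          = B t 0 * (-1) + ∑ j : Fin (k+1), B t j.succ * σ j := by
        simp only [Matrix.mulVec, dotProduct]
        rw [Fin.sum_univ_succ]
        simp [Fin.cons_zero, Fin.cons_succ]
      rw [h1]
      have h2 : B t 0 = y (r t) := by simp [hB]
      have h3 : ∀ j : Fin (k+1), B t j.succ = C (r t) j := by
        intro j; simp [hB]
      simp only [h2, h3]
      have h4 : ∑ j : Fin (k+1), C (r t) j * σ j = (C.mulVec σ) (r t) := by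
        simp [Matrix.mulVec, dotProduct]
      rw [h4, ← hyC]
      simp
  have hcof := Matrix.det_succ_column_zero B
  have hsub : ∀ t : Fin (k+2),
      (B.submatrix (Fin.succAbove t) Fin.succ) = C.submatrix (fun s => r (t.succAbove s)) id := by
    intro t; ext s j
    simp [hB, Matrix.submatrix_apply]
  have hMpos : ∀ t : Fin (k+2), 0 < (C.submatrix (fun s => r (t.succAbove s)) id).det :=
    fun t => hminor _ (hrmono.comp (Fin.strictMono_succAbove t))
  have hsum : ∑ t : Fin (k+2), ((-1:ℝ)^(t:ℕ) * (z (r 0) * y (r t)))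
      * (C.submatrix (fun s => r (t.succAbove s)) id).det = 0 := by
    have h5 : ∑ t : Fin (k+2), (-1:ℝ)^(t:ℕ) * B t 0
        * (B.submatrix (Fin.succAbove t) Fin.succ).det = 0 := by
      rw [← hcof, hBdet]
    have h6 : ∑ t : Fin (k+2), ((-1:ℝ)^(t:ℕ) * (z (r 0) * y (r t)))
        * (C.submatrix (fun s => r (t.succAbove s)) id).det
        = z (r 0) * ∑ t : Fin (k+2), (-1:ℝ)^(t:ℕ) * B t 0
            * (B.submatrix (Fin.succAbove t) Fin.succ).det := by
      rw [Finset.mul_sum]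
      refine Finset.sum_congr rfl (fun t _ => ?_)
      rw [hsub t]
      have h2 : B t 0 = y (r t) := by simp [hB]
      rw [h2]; ring
    rw [h6, h5, mul_zero]
  have hterms0 := (Finset.sum_eq_zero_iff_of_nonneg (fun t _ =>
    mul_nonneg (hysign t) (hMpos t).le)).1 hsum
  have hy0 : ∀ t : Fin (k+2), y (r t) = 0 := by
    intro t
    have h1 := hterms0 t (Finset.mem_univ t)
    have h2 := (hMpos t).ne'
    have h4 : (-1:ℝ)^(t:ℕ) * (z (r 0) * y (r t)) = 0 := by
      rcases mul_eq_zero.1 h1 with h|h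
      · exact h
      · exact absurd h h2
    have hpow : ((-1:ℝ))^(t:ℕ) ≠ 0 := pow_ne_zero _ (by norm_num)
    rcases mul_eq_zero.1 h4 with h|h
    · exact absurd h hpow
    · rcases mul_eq_zero.1 h with h|h
      · exact absurd h hz0
      · exact h
  have hcastmono : StrictMono (fun t : Fin (k+1) => r (Fin.castSucc t)) := by
    intro s t hst
    exact hrmono (show Fin.castSucc s < Fin.castSucc t from hst)
  have hE : (C.submatrix (fun t : Fin (k+1) => r (Fin.castSucc t)) id).mulVec σ = 0 := by
    funext t
    have h1 : (C.submatrix (fun t : Fin (k+1) => r (Fin.castSucc t)) id).mulVec σ t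
        = (C.mulVec σ) (r (Fin.castSucc t)) := by
      simp [Matrix.mulVec, dotProduct, Matrix.submatrix_apply]
    rw [h1, ← hyC, hy0]
    rfl
  have hσne : σ ≠ 0 := by
    intro h
    have := congrFun h 0
    simp [hσ] at this
    rcases hε with h'|h' <;> rw [h'] at this <;> norm_num at this
  have hdet0 : (C.submatrix (fun t : Fin (k+1) => r (Fin.castSucc t)) id).det = 0 :=
    Matrix.exists_mulVec_eq_zero_iff.mp ⟨σ, hσne, hE⟩
  have := hminor _ hcastmono
  rw [hdet0] at this
  exact lt_irrefl 0 this
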